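/- arXiv:2505.11298 — 5 statements merged into one kernel-verified Lean document; each statement's English description precedes it below -/
import Mathlib

section
/- Let G and H be finite simple graphs, and let x' and x̃ be two feature assignments defined on all vertices of G and H, with x' taking values in a normed space E' and x̃ in a normed space E. Assume: (i) for all u ∈ V(G) and v ∈ V(H), ‖x'_u − x'_v‖ ≤ ‖x̃_u − x̃_v‖; and (ii) for every vertex u of G or H, ‖x'_u‖ ≤ ‖x̃_u‖. Then for every depth t ≥ 1, TMD^t((G, x'), (H, x')) ≤ TMD^t((G, x̃), (H, x̃)), where (G, x') denotes the graph G equipped with the features x'. -/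
open Finset

universe u v

/-- Minimum matching cost between two equal-length tuples, with ground cost `d`. -/
noncomputable def matchCost {α : Type u} (d : α → α → ℝ) {n : ℕ} (x y : Fin n → α) : ℝ :=
  ⨅ σ : Equiv.Perm (Fin n), ∑ i, d (x i) (y (σ i))

/-- Pad a list to length `n` with the padding element `z`. -/
def padWith {α : Type u} (z : α) (L : List α) (n : ℕ) : Fin n → α :=
  fun i => if h : (i : ℕ) < L.length then L.get ⟨i, h⟩ else z

/-- Optimal matching cost between two lists, padded with `z` to equal length. -/
noncomputable def padMatchCost {α : Type u} (d : α → α → ℝ) (z : α) (L L' : List α) : ℝ :=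
  matchCost d (padWith z L (max L.length L'.length)) (padWith z L' (max L.length L'.length))

/-- A feature tree: a root feature together with a finite (multi)set of children,
represented as a list (all notions built on it are invariant under permutation). -/
inductive FeatureTree (E : Type u) : Type u
  | node (root : E) (children : List (FeatureTree E)) : FeatureTree E

namespace FeatureTree

/-- The blank tree `T_∅`. -/
def blank {E : Type u} [Zero E] : FeatureTree E := node 0 []

/-- Fuel-based tree distance. -/
noncomputable def TDAux {E : Type u} [NormedAddCommGroup E] :
    ℕ → FeatureTree E → FeatureTree E → ℝ
  | 0, _, _ => 0
  | (m+1), node a S, node b S' => ‖a - b‖ + padMatchCost (TDAux m) blank S S'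

/-- The tree distance `TD`: `TD((a,S),(b,S')) = ‖a-b‖ + OT_TD(ρ(S,S'))`.
The fuel `sizeOf t₁ + sizeOf t₂` dominates the recursion depth, so this computes
the recursively defined tree distance. -/
noncomputable def TD {E : Type u} [NormedAddCommGroup E] (t₁ t₂ : FeatureTree E) : ℝ :=
  TDAux (sizeOf t₁ + sizeOf t₂) t₁ t₂

end FeatureTree

/-- A featured graph: a finite simple graph with node features in `E`. -/
structure FeaturedGraph (E : Type u) : Type (u+1) where
  V : Type
  fintypeV : Fintype V
  decEqV : DecidableEq V
  graph : SimpleGraph V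
  decAdj : DecidableRel graph.Adj
  feat : V → E

attribute [instance] FeaturedGraph.fintypeV FeaturedGraph.decEqV FeaturedGraph.decAdj

/-- Depth-(t+1) computation tree of node `v`:
`compTree G 0 v = (x_v, ∅)` is the depth-1 tree `T_v^1`, and
`compTree G (t+1) v = (x_v, {{compTree G t u : u ∈ N(v)}})`. -/
noncomputable def FeaturedGraph.compTree {E : Type u} (G : FeaturedGraph E) :
    ℕ → G.V → FeatureTree E
  | 0, v => .node (G.feat v) []
  | (t+1), v => .node (G.feat v) ((G.graph.neighborFinset v).toList.map (G.compTree t))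

/-- Depth-`t` Tree Mover's Distance (for `t ≥ 1`):
`TMD^t(G,H) = OT_TD(ρ({{T_v^t : v ∈ V(G)}}, {{T_u^t : u ∈ V(H)}}))`. -/
noncomputable def TMD {E : Type u} [NormedAddCommGroup E] (t : ℕ) (G H : FeaturedGraph E) : ℝ :=
  padMatchCost FeatureTree.TD FeatureTree.blank
    ((Finset.univ : Finset G.V).toList.map (G.compTree (t-1)))
    ((Finset.univ : Finset H.V).toList.map (H.compTree (t-1)))

/-- Package a finite simple graph with features into a featured graph. -/
def FG {E : Type u} (V : Type) [Fintype V] [DecidableEq V]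
    (G : SimpleGraph V) [inst : DecidableRel G.Adj] (x : V → E) : FeaturedGraph E :=
  ⟨V, ‹_›, ‹_›, G, inst, x⟩


/-! ### Auxiliary lemmas -/

section Aux

lemma foldr_max_le {b : ℕ} : ∀ {l : List ℕ}, (∀ a ∈ l, a ≤ b) → l.foldr max 0 ≤ b
  | [], _ => Nat.zero_le b
  | c :: l, h => by
    simp only [List.foldr_cons, max_le_iff]
    exact ⟨h c List.mem_cons_self, foldr_max_le fun a ha => h a (List.mem_cons_of_mem _ ha)⟩

lemma le_foldr_max {a : ℕ} : ∀ {l : List ℕ}, a ∈ l → a ≤ l.foldr max 0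
  | [], h => by cases h
  | c :: l, h => by
    simp only [List.foldr_cons, le_max_iff]
    rcases List.mem_cons.1 h with h | h
    · exact Or.inl h.le
    · exact Or.inr (le_foldr_max h)

lemma matchCost_le_matchCost {α : Type u} {α' : Type v} (d : α → α → ℝ) (d' : α' → α' → ℝ)
    {n : ℕ} (x y : Fin n → α) (x' y' : Fin n → α')
    (h : ∀ i j, d (x i) (y j) ≤ d' (x' i) (y' j)) :
    matchCost d x y ≤ matchCost d' x' y' := by
  unfold matchCost
  apply ciInf_mono
  · exact Set.Finite.bddBelow (Set.finite_range _)
  · intro σ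
    exact Finset.sum_le_sum fun i _ => h i (σ i)

lemma padWith_map {γ : Type*} {α : Type u} (z : α) (f : γ → α) (P : List γ)
    {n : ℕ} (i : Fin n) :
    padWith z (P.map f) n i = if h : (i : ℕ) < P.length then f (P.get ⟨i, h⟩) else z := by
  unfold padWith
  rcases lt_or_ge (i : ℕ) P.length with h | h
  · rw [dif_pos (by simpa using h), dif_pos h]
    simp
  · rw [dif_neg (by simpa using not_lt.2 h), dif_neg (not_lt.2 h)]

lemma padMatchCost_map_le {γ : Type*} {δ : Type*} {α : Type u} {α' : Type v}
    (d : α → α → ℝ) (d' : α' → α' → ℝ) (z : α) (z' : α')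
    (P : List γ) (Q : List δ) (f : γ → α) (g : δ → α) (f' : γ → α') (g' : δ → α')
    (hfg : ∀ u ∈ P, ∀ v ∈ Q, d (f u) (g v) ≤ d' (f' u) (g' v))
    (hfz : ∀ u ∈ P, d (f u) z ≤ d' (f' u) z')
    (hzg : ∀ v ∈ Q, d z (g v) ≤ d' z' (g' v)) :
    padMatchCost d z (P.map f) (Q.map g) ≤ padMatchCost d' z' (P.map f') (Q.map g') := by
  unfold padMatchCost
  have e : max (P.map f').length (Q.map g').length = max (P.map f).length (Q.map g).length := by
    simp
  rw [e]
  apply matchCost_le_matchCost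
  intro i j
  rw [padWith_map, padWith_map, padWith_map, padWith_map]
  rcases lt_or_ge (i : ℕ) P.length with hi | hi <;> rcases lt_or_ge (j : ℕ) Q.length with hj | hj
  · rw [dif_pos hi, dif_pos hj, dif_pos hi, dif_pos hj]
    exact hfg _ (List.get_mem _ _) _ (List.get_mem _ _)
  · rw [dif_pos hi, dif_neg (by omega), dif_pos hi, dif_neg (by omega)]
    exact hfz _ (List.get_mem _ _)
  · rw [dif_neg (by omega), dif_pos hj, dif_neg (by omega), dif_pos hj]
    exact hzg _ (List.get_mem _ _)
  · exfalso
    have h1 := i.isLt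
    have h2 := j.isLt
    simp only [List.length_map] at h1 h2
    omega

lemma padMatchCost_congr {α : Type u} (d d' : α → α → ℝ) (z : α) (S S' : List α)
    (h : ∀ u ∈ S, ∀ v ∈ S', d u v = d' u v)
    (hz1 : ∀ u ∈ S, d u z = d' u z)
    (hz2 : ∀ v ∈ S', d z v = d' z v) :
    padMatchCost d z S S' = padMatchCost d' z S S' := by
  have h1 := padMatchCost_map_le d d' z z S S' id id id id
    (fun u hu v hv => (h u hu v hv).le) (fun u hu => (hz1 u hu).le) (fun v hv => (hz2 v hv).le)
  have h2 := padMatchCost_map_le d' d z z S S' id id id id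
    (fun u hu v hv => (h u hu v hv).ge) (fun u hu => (hz1 u hu).ge) (fun v hv => (hz2 v hv).ge)
  simp only [List.map_id] at h1 h2
  exact le_antisymm h1 h2

namespace FeatureTree

def depth {E : Type u} : FeatureTree E → ℕ
  | .node _ S => (S.attach.map fun u => depth u.1).foldr max 0 + 1
decreasing_by
  have := List.sizeOf_lt_of_mem u.2
  simp only [FeatureTree.node.sizeOf_spec]
  omega

lemma depth_node {E : Type u} (a : E) (S : List (FeatureTree E)) :
    depth (.node a S) = (S.map depth).foldr max 0 + 1 := by
  rw [depth]
  congr 1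
  rw [List.map_attach_eq_pmap]
  simp

lemma one_le_depth {E : Type u} (t : FeatureTree E) : 1 ≤ depth t := by
  cases t with
  | node a S => rw [depth_node]; omega

lemma depth_blank {E : Type u} [NormedAddCommGroup E] : depth (blank : FeatureTree E) = 1 := by
  rw [blank, depth_node]; simp

lemma depth_le_sizeOf {E : Type u} : ∀ t : FeatureTree E, depth t ≤ sizeOf t
  | .node a S => by
    have h : ∀ u ∈ S, depth u ≤ sizeOf u := fun u hu => depth_le_sizeOf u
    rw [depth_node]
    have h2 : (S.map depth).foldr max 0 ≤ sizeOf S := by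
      induction S with
      | nil => simp
      | cons c S ih =>
        simp only [List.map_cons, List.foldr_cons]
        have h1 := h c List.mem_cons_self
        have h3 := ih (fun u hu => h u (List.mem_cons_of_mem _ hu))
        simp only [List.cons.sizeOf_spec] at *
        omega
    have h4 : sizeOf (FeatureTree.node a S) = 1 + sizeOf a + sizeOf S := by simp
    omega
decreasing_by
  have := List.sizeOf_lt_of_mem hu
  simp only [FeatureTree.node.sizeOf_spec]
  omega

lemma depth_child_le {E : Type u} {a : E} {S : List (FeatureTree E)} {u : FeatureTree E}
    (hu : u ∈ S) : depth u + 1 ≤ depth (.node a S) := by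
  rw [depth_node]
  have := le_foldr_max (List.mem_map_of_mem (f := depth) hu)
  omega

lemma TDAux_congr {E : Type u} [NormedAddCommGroup E] :
    ∀ (m m' : ℕ) (t₁ t₂ : FeatureTree E), depth t₁ ≤ m → depth t₂ ≤ m →
      depth t₁ ≤ m' → depth t₂ ≤ m' → TDAux m t₁ t₂ = TDAux m' t₁ t₂ := by
  intro m
  induction m with
  | zero => intro m' t₁ t₂ h1; exact absurd h1 (by have := one_le_depth t₁; omega)
  | succ m ih =>
    rintro (_ | m') ⟨a, S⟩ ⟨b, S'⟩ h1 h2 h1' h2'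
    · exact absurd h1' (by have := one_le_depth (FeatureTree.node a S); omega)
    · show ‖a - b‖ + padMatchCost (TDAux m) blank S S'
        = ‖a - b‖ + padMatchCost (TDAux m') blank S S'
      congr 1
      apply padMatchCost_congr
      · intro u hu v hv
        have hu1 := depth_child_le (a := a) hu
        have hv1 := depth_child_le (a := b) hv
        exact ih m' u v (by omega) (by omega) (by omega) (by omega)
      · intro u hu
        have hu1 := depth_child_le (a := a) hu
        have := one_le_depth u
        exact ih m' u blank (by omega) (by rw [depth_blank]; omega)
          (by omega) (by rw [depth_blank]; omega)
      · intro v hv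
        have hv1 := depth_child_le (a := b) hv
        have := one_le_depth v
        exact ih m' blank v (by rw [depth_blank]; omega) (by omega)
          (by rw [depth_blank]; omega) (by omega)

lemma TD_eq_TDAux {E : Type u} [NormedAddCommGroup E] {m : ℕ} {t₁ t₂ : FeatureTree E}
    (h1 : depth t₁ ≤ m) (h2 : depth t₂ ≤ m) : TD t₁ t₂ = TDAux m t₁ t₂ := by
  rw [TD]
  have s1 := depth_le_sizeOf t₁
  have s2 := depth_le_sizeOf t₂
  exact TDAux_congr _ m t₁ t₂ (by omega) (by omega) h1 h2

end FeatureTree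

lemma depth_compTree {E : Type u} (G : FeaturedGraph E) :
    ∀ (t : ℕ) (v : G.V), FeatureTree.depth (G.compTree t v) ≤ t + 1 := by
  intro t
  induction t with
  | zero => intro v; rw [FeaturedGraph.compTree, FeatureTree.depth_node]; simp
  | succ t ih =>
    intro v
    rw [FeaturedGraph.compTree, FeatureTree.depth_node]
    have : ((((G.graph.neighborFinset v).toList.map (G.compTree t)).map
        FeatureTree.depth).foldr max 0) ≤ t + 1 := by
      apply foldr_max_le
      intro a ha
      simp only [List.map_map, List.mem_map] at ha
      obtain ⟨u, -, rfl⟩ := ha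
      exact ih u
    omega

end Aux

section Main

open FeatureTree

lemma matchCost_zero {α : Type u} (d : α → α → ℝ) (x y : Fin 0 → α) : matchCost d x y = 0 := by
  unfold matchCost
  simp only [Finset.univ_eq_empty, Finset.sum_empty]
  exact ciInf_const

lemma padMatchCost_nil_nil {α : Type u} (d : α → α → ℝ) (z : α) :
    padMatchCost d z [] [] = 0 := by
  unfold padMatchCost
  exact matchCost_zero _ _ _

lemma TDAux_node_node {E : Type u} [NormedAddCommGroup E] (m : ℕ) (a b : E)
    (S S' : List (FeatureTree E)) :
    TDAux (m+1) (.node a S) (.node b S') = ‖a - b‖ + padMatchCost (TDAux m) blank S S' := by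
  rw [TDAux]

variable {E : Type u} {E' : Type v} [NormedAddCommGroup E] [NormedAddCommGroup E']
  {α β : Type} [Fintype α] [DecidableEq α] [Fintype β] [DecidableEq β]
  (G : SimpleGraph α) [DecidableRel G.Adj] (H : SimpleGraph β) [DecidableRel H.Adj]
  (x'G : α → E') (x'H : β → E') (xtG : α → E) (xtH : β → E)

lemma compTree_mono
    (hcross : ∀ (u : α) (v : β), ‖x'G u - x'H v‖ ≤ ‖xtG u - xtH v‖)
    (hnormG : ∀ u : α, ‖x'G u‖ ≤ ‖xtG u‖)
    (hnormH : ∀ v : β, ‖x'H v‖ ≤ ‖xtH v‖) : ∀ t : ℕ,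
    (∀ (u : α) (v : β), TDAux (t+1) ((FG α G x'G).compTree t u) ((FG β H x'H).compTree t v)
        ≤ TDAux (t+1) ((FG α G xtG).compTree t u) ((FG β H xtH).compTree t v)) ∧
    (∀ u : α, TDAux (t+1) ((FG α G x'G).compTree t u) blank
        ≤ TDAux (t+1) ((FG α G xtG).compTree t u) blank) ∧
    (∀ u : α, TDAux (t+1) blank ((FG α G x'G).compTree t u)
        ≤ TDAux (t+1) blank ((FG α G xtG).compTree t u)) ∧
    (∀ v : β, TDAux (t+1) ((FG β H x'H).compTree t v) blank
        ≤ TDAux (t+1) ((FG β H xtH).compTree t v) blank) ∧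
    (∀ v : β, TDAux (t+1) blank ((FG β H x'H).compTree t v)
        ≤ TDAux (t+1) blank ((FG β H xtH).compTree t v)) := by
  intro t
  induction t with
  | zero =>
    refine ⟨fun u v => ?_, fun u => ?_, fun u => ?_, fun v => ?_, fun v => ?_⟩
    · show TDAux 1 (.node (x'G u) []) (.node (x'H v) []) ≤
        TDAux 1 (.node (xtG u) []) (.node (xtH v) [])
      rw [TDAux_node_node, TDAux_node_node, padMatchCost_nil_nil, padMatchCost_nil_nil]
      simpa using hcross u v
    · show TDAux 1 (.node (x'G u) []) (.node (0 : E') []) ≤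
        TDAux 1 (.node (xtG u) []) (.node (0 : E) [])
      rw [TDAux_node_node, TDAux_node_node, padMatchCost_nil_nil, padMatchCost_nil_nil]
      simpa [sub_zero] using hnormG u
    · show TDAux 1 (.node (0 : E') []) (.node (x'G u) []) ≤
        TDAux 1 (.node (0 : E) []) (.node (xtG u) [])
      rw [TDAux_node_node, TDAux_node_node, padMatchCost_nil_nil, padMatchCost_nil_nil]
      simpa [zero_sub, norm_neg] using hnormG u
    · show TDAux 1 (.node (x'H v) []) (.node (0 : E') []) ≤
        TDAux 1 (.node (xtH v) []) (.node (0 : E) [])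
      rw [TDAux_node_node, TDAux_node_node, padMatchCost_nil_nil, padMatchCost_nil_nil]
      simpa [sub_zero] using hnormH v
    · show TDAux 1 (.node (0 : E') []) (.node (x'H v) []) ≤
        TDAux 1 (.node (0 : E) []) (.node (xtH v) [])
      rw [TDAux_node_node, TDAux_node_node, padMatchCost_nil_nil, padMatchCost_nil_nil]
      simpa [zero_sub, norm_neg] using hnormH v
  | succ t ih =>
    obtain ⟨ih1, ih2, ih3, ih4, ih5⟩ := ih
    refine ⟨fun u v => ?_, fun u => ?_, fun u => ?_, fun v => ?_, fun v => ?_⟩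
    · show TDAux (t+2) (.node (x'G u) ((G.neighborFinset u).toList.map ((FG α G x'G).compTree t)))
          (.node (x'H v) ((H.neighborFinset v).toList.map ((FG β H x'H).compTree t))) ≤
        TDAux (t+2) (.node (xtG u) ((G.neighborFinset u).toList.map ((FG α G xtG).compTree t)))
          (.node (xtH v) ((H.neighborFinset v).toList.map ((FG β H xtH).compTree t)))
      rw [TDAux_node_node, TDAux_node_node]
      exact add_le_add (hcross u v)
        (padMatchCost_map_le _ _ _ _ _ _ _ _ _ _
          (fun u₁ _ v₁ _ => ih1 u₁ v₁) (fun u₁ _ => ih2 u₁) (fun v₁ _ => ih5 v₁))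
    · show TDAux (t+2) (.node (x'G u) ((G.neighborFinset u).toList.map ((FG α G x'G).compTree t)))
          (.node 0 []) ≤ TDAux (t+2)
          (.node (xtG u) ((G.neighborFinset u).toList.map ((FG α G xtG).compTree t))) (.node 0 [])
      rw [TDAux_node_node, TDAux_node_node]
      have hp := padMatchCost_map_le (TDAux (t+1)) (TDAux (t+1)) blank blank
        (G.neighborFinset u).toList ([] : List α)
        ((FG α G x'G).compTree t) ((FG α G x'G).compTree t)
        ((FG α G xtG).compTree t) ((FG α G xtG).compTree t)
        (fun _ _ v₁ hv => absurd hv List.not_mem_nil)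
        (fun u₁ _ => ih2 u₁)
        (fun v₁ hv => absurd hv List.not_mem_nil)
      simp only [sub_zero]
      exact add_le_add (hnormG u) hp
    · show TDAux (t+2) (.node 0 [])
          (.node (x'G u) ((G.neighborFinset u).toList.map ((FG α G x'G).compTree t)))
          ≤ TDAux (t+2) (.node 0 [])
          (.node (xtG u) ((G.neighborFinset u).toList.map ((FG α G xtG).compTree t)))
      rw [TDAux_node_node, TDAux_node_node]
      have hp := padMatchCost_map_le (TDAux (t+1)) (TDAux (t+1)) blank blank
        ([] : List α) (G.neighborFinset u).toList
        ((FG α G x'G).compTree t) ((FG α G x'G).compTree t)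
        ((FG α G xtG).compTree t) ((FG α G xtG).compTree t)
        (fun u₁ hu _ _ => absurd hu List.not_mem_nil)
        (fun u₁ hu => absurd hu List.not_mem_nil)
        (fun v₁ _ => ih3 v₁)
      simp only [zero_sub, norm_neg]
      exact add_le_add (hnormG u) hp
    · show TDAux (t+2) (.node (x'H v) ((H.neighborFinset v).toList.map ((FG β H x'H).compTree t)))
          (.node 0 []) ≤ TDAux (t+2)
          (.node (xtH v) ((H.neighborFinset v).toList.map ((FG β H xtH).compTree t))) (.node 0 [])
      rw [TDAux_node_node, TDAux_node_node]
      have hp := padMatchCost_map_le (TDAux (t+1)) (TDAux (t+1)) blank blank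
        (H.neighborFinset v).toList ([] : List β)
        ((FG β H x'H).compTree t) ((FG β H x'H).compTree t)
        ((FG β H xtH).compTree t) ((FG β H xtH).compTree t)
        (fun _ _ v₁ hv => absurd hv List.not_mem_nil)
        (fun v₁ _ => ih4 v₁)
        (fun v₁ hv => absurd hv List.not_mem_nil)
      simp only [sub_zero]
      exact add_le_add (hnormH v) hp
    · show TDAux (t+2) (.node 0 [])
          (.node (x'H v) ((H.neighborFinset v).toList.map ((FG β H x'H).compTree t)))
          ≤ TDAux (t+2) (.node 0 [])
          (.node (xtH v) ((H.neighborFinset v).toList.map ((FG β H xtH).compTree t)))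
      rw [TDAux_node_node, TDAux_node_node]
      have hp := padMatchCost_map_le (TDAux (t+1)) (TDAux (t+1)) blank blank
        ([] : List β) (H.neighborFinset v).toList
        ((FG β H x'H).compTree t) ((FG β H x'H).compTree t)
        ((FG β H xtH).compTree t) ((FG β H xtH).compTree t)
        (fun u₁ hu _ _ => absurd hu List.not_mem_nil)
        (fun u₁ hu => absurd hu List.not_mem_nil)
        (fun v₁ _ => ih5 v₁)
      simp only [zero_sub, norm_neg]
      exact add_le_add (hnormH v) hp

end Main
/-- Let `G`, `H` be finite simple graphs and let `x'` (valued in `E'`) and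
`x̃` (valued in `E`) be feature assignments on the vertices of both graphs.  If
(i) `‖x'_u − x'_v‖ ≤ ‖x̃_u − x̃_v‖` for all `u ∈ V(G)`, `v ∈ V(H)`, and
(ii) `‖x'_u‖ ≤ ‖x̃_u‖` for every vertex `u` of `G` or `H`, then for every depth `t ≥ 1`,
`TMD^t((G,x'), (H,x')) ≤ TMD^t((G,x̃), (H,x̃))`. -/
theorem TMD_mono_of_feature_contraction {E : Type u} {E' : Type v}
    [NormedAddCommGroup E] [NormedSpace ℝ E] [NormedAddCommGroup E'] [NormedSpace ℝ E']
    {α β : Type} [Fintype α] [DecidableEq α] [Fintype β] [DecidableEq β]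
    (G : SimpleGraph α) [DecidableRel G.Adj] (H : SimpleGraph β) [DecidableRel H.Adj]
    (x'G : α → E') (x'H : β → E') (xtG : α → E) (xtH : β → E)
    (hcross : ∀ (u : α) (v : β), ‖x'G u - x'H v‖ ≤ ‖xtG u - xtH v‖)
    (hnormG : ∀ u : α, ‖x'G u‖ ≤ ‖xtG u‖)
    (hnormH : ∀ v : β, ‖x'H v‖ ≤ ‖xtH v‖)
    (t : ℕ) (ht : 1 ≤ t) :
    TMD t (FG α G x'G) (FG β H x'H) ≤ TMD t (FG α G xtG) (FG β H xtH) := by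
  obtain ⟨ih1, ih2, ih3, ih4, ih5⟩ :=
    compTree_mono G H x'G x'H xtG xtH hcross hnormG hnormH (t-1)
  unfold TMD
  apply padMatchCost_map_le
  · intro u _ v _
    erw [FeatureTree.TD_eq_TDAux (m := (t-1)+1) (depth_compTree _ _ _) (depth_compTree _ _ _),
        FeatureTree.TD_eq_TDAux (m := (t-1)+1) (depth_compTree _ _ _) (depth_compTree _ _ _)]
    exact ih1 u v
  · intro u _
    erw [FeatureTree.TD_eq_TDAux (m := (t-1)+1) (depth_compTree _ _ _)
          (by rw [FeatureTree.depth_blank]; omega),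
        FeatureTree.TD_eq_TDAux (m := (t-1)+1) (depth_compTree _ _ _)
          (by rw [FeatureTree.depth_blank]; omega)]
    exact ih2 u
  · intro v _
    erw [FeatureTree.TD_eq_TDAux (m := (t-1)+1) (by rw [FeatureTree.depth_blank]; omega)
          (depth_compTree _ _ _),
        FeatureTree.TD_eq_TDAux (m := (t-1)+1) (by rw [FeatureTree.depth_blank]; omega)
          (depth_compTree _ _ _)]
    exact ih5 v
end

section
/- Let G and H be finite simple graphs with node features x_v ∈ ℝ^p, and let c assign to each vertex v of G or H an augmentation vector c_v ∈ ℝ^q. For a subset I ⊆ {1, …, q} of the augmentation coordinates, define x̃_v := (x_v, c_v) ∈ ℝ^{p+q} and x'_v := (x_v, (c_v)_I) ∈ ℝ^{p+|I|}, where (c_v)_I is the restriction of c_v to the coordinates in I. Then for every depth t ≥ 1, TMD^t((G, x'), (H, x')) ≤ TMD^t((G, x̃), (H, x̃)). -/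
open Finset

universe u v

/-- View a plain vector as a point of Euclidean space. -/
def ofVec {n : ℕ} (x : Fin n → ℝ) : EuclideanSpace ℝ (Fin n) := WithLp.toLp 2 x

/-- View a point of Euclidean space as a plain vector. -/
def toVec {n : ℕ} (x : EuclideanSpace ℝ (Fin n)) : Fin n → ℝ := x

/-- Concatenation `(a, b) ∈ ℝ^{p+q}` of `a ∈ ℝ^p` and `b ∈ ℝ^q`. -/
def concatE {p q : ℕ} (a : EuclideanSpace ℝ (Fin p)) (b : EuclideanSpace ℝ (Fin q)) :
    EuclideanSpace ℝ (Fin (p + q)) :=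
  ofVec (Fin.append (toVec a) (toVec b))

/-- Restriction `b_I ∈ ℝ^{|I|}` of `b ∈ ℝ^q` to the coordinates in `I`
(listed in increasing order). -/
def restrictE {q : ℕ} (I : Finset (Fin q)) (b : EuclideanSpace ℝ (Fin q)) :
    EuclideanSpace ℝ (Fin I.card) :=
  ofVec fun j => toVec b ((I.orderIsoOfFin rfl j : I) : Fin q)


/-! ### Auxiliary development -/

namespace TMDAux

open FeatureTree

/-- Map a feature tree through a function on features. -/
def mapTree {E : Type u} {E' : Type v} (φ : E → E') : FeatureTree E → FeatureTree E'
  | .node a S => .node (φ a) (S.attach.map fun ⟨s, _⟩ => mapTree φ s)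

@[simp] theorem mapTree_node {E : Type u} {E' : Type v} (φ : E → E') (a : E)
    (S : List (FeatureTree E)) :
    mapTree φ (.node a S) = .node (φ a) (S.map (mapTree φ)) := by
  rw [mapTree, List.attach_map_val]

theorem mapTree_blank {E : Type u} {E' : Type v} [Zero E] [Zero E'] (φ : E → E')
    (hz : φ 0 = 0) : mapTree φ (blank : FeatureTree E) = blank := by
  simp [blank, hz]

theorem sizeOf_mapTree {E : Type u} {E' : Type v} [NormedAddCommGroup E]
    [NormedAddCommGroup E'] (φ : E → E') :
    ∀ t : FeatureTree E, sizeOf (mapTree φ t) = sizeOf t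
  | .node a S => by
    rw [mapTree_node]
    have h : ∀ s ∈ S, sizeOf (mapTree φ s) = sizeOf s := fun s _ => sizeOf_mapTree φ s
    simp only [FeatureTree.node.sizeOf_spec]
    have hS : sizeOf (S.map (mapTree φ)) = sizeOf S := by
      induction S with
      | nil => simp
      | cons hd tl ih =>
        simp only [List.map_cons, List.cons.sizeOf_spec, h hd (by simp),
          ih (fun s hs => h s (by simp [hs]))]
    simp [hS]

theorem matchCost_map_le {α : Type u} {β : Type v} (d : α → α → ℝ) (d' : β → β → ℝ)
    (f : α → β) {n : ℕ} (x y : Fin n → α)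
    (h : ∀ a b, d' (f a) (f b) ≤ d a b) :
    matchCost d' (f ∘ x) (f ∘ y) ≤ matchCost d x y := by
  refine ciInf_mono (Set.Finite.bddBelow (Set.finite_range _)) fun σ => ?_
  exact Finset.sum_le_sum fun i _ => h _ _

theorem padWith_map {α : Type u} {β : Type v} (f : α → β) (z : α) (L : List α) (n : ℕ) :
    padWith (f z) (L.map f) n = f ∘ padWith z L n := by
  funext i
  simp only [padWith, List.length_map, Function.comp_apply]
  split <;> simp

theorem padMatchCost_map_le {α : Type u} {β : Type v} (d : α → α → ℝ) (d' : β → β → ℝ)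
    (f : α → β) (z : α) (z' : β) (hz : f z = z') (L L' : List α)
    (h : ∀ a b, d' (f a) (f b) ≤ d a b) :
    padMatchCost d' z' (L.map f) (L'.map f) ≤ padMatchCost d z L L' := by
  unfold padMatchCost
  rw [List.length_map, List.length_map, ← hz, padWith_map, padWith_map]
  exact matchCost_map_le d d' f _ _ h

theorem TDAux_map_le {E : Type u} {E' : Type v} [NormedAddCommGroup E] [NormedAddCommGroup E']
    (φ : E → E') (hφ : ∀ a b : E, ‖φ a - φ b‖ ≤ ‖a - b‖) (hz : φ 0 = 0) :
    ∀ (m : ℕ) (s t : FeatureTree E),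
      TDAux m (mapTree φ s) (mapTree φ t) ≤ TDAux m s t := by
  intro m
  induction m with
  | zero => intro s t; simp [TDAux]
  | succ m ih =>
    rintro ⟨a, S⟩ ⟨b, S'⟩
    simp only [mapTree_node, TDAux]
    refine add_le_add (hφ a b) ?_
    exact padMatchCost_map_le (TDAux m) (TDAux m) (mapTree φ) blank blank
      (mapTree_blank φ hz) S S' (ih)

theorem TD_map_le {E : Type u} {E' : Type v} [NormedAddCommGroup E] [NormedAddCommGroup E']
    (φ : E → E') (hφ : ∀ a b : E, ‖φ a - φ b‖ ≤ ‖a - b‖) (hz : φ 0 = 0)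
    (s t : FeatureTree E) : TD (mapTree φ s) (mapTree φ t) ≤ TD s t := by
  unfold TD
  rw [sizeOf_mapTree, sizeOf_mapTree]
  exact TDAux_map_le φ hφ hz _ s t

theorem compTree_map {E : Type u} {E' : Type v} (φ : E → E')
    {V : Type} [Fintype V] [DecidableEq V] (Gr : SimpleGraph V) [DecidableRel Gr.Adj]
    (x : V → E) :
    ∀ (t : ℕ) (v : V),
      (FG V Gr (fun w => φ (x w))).compTree t v = mapTree φ ((FG V Gr x).compTree t v) := by
  intro t
  induction t with
  | zero => intro v; simp [FeaturedGraph.compTree, FG]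
  | succ t ih =>
    intro v
    simp only [FeaturedGraph.compTree, FG, mapTree_node, List.map_map]
    congr 1
    exact List.map_congr_left fun u _ => ih u

theorem TMD_map_le {E : Type u} {E' : Type v} [NormedAddCommGroup E] [NormedAddCommGroup E']
    (φ : E → E') (hφ : ∀ a b : E, ‖φ a - φ b‖ ≤ ‖a - b‖) (hz : φ 0 = 0)
    {V W : Type} [Fintype V] [DecidableEq V] [Fintype W] [DecidableEq W]
    (Gr : SimpleGraph V) [DecidableRel Gr.Adj] (Hr : SimpleGraph W) [DecidableRel Hr.Adj]
    (x : V → E) (y : W → E) (t : ℕ) :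
    TMD t (FG V Gr (fun v => φ (x v))) (FG W Hr (fun w => φ (y w))) ≤
      TMD t (FG V Gr x) (FG W Hr y) := by
  unfold TMD
  have h1 : ((Finset.univ : Finset (FG V Gr (fun v => φ (x v))).V).toList.map
      ((FG V Gr (fun v => φ (x v))).compTree (t-1))) =
      ((Finset.univ : Finset (FG V Gr x).V).toList.map ((FG V Gr x).compTree (t-1))).map
        (mapTree φ) := by
    rw [List.map_map]
    exact List.map_congr_left fun v _ => compTree_map φ Gr x (t-1) v
  have h2 : ((Finset.univ : Finset (FG W Hr (fun w => φ (y w))).V).toList.map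
      ((FG W Hr (fun w => φ (y w))).compTree (t-1))) =
      ((Finset.univ : Finset (FG W Hr y).V).toList.map ((FG W Hr y).compTree (t-1))).map
        (mapTree φ) := by
    rw [List.map_map]
    exact List.map_congr_left fun w _ => compTree_map φ Hr y (t-1) w
  rw [h1, h2]
  exact padMatchCost_map_le TD TD (mapTree φ) blank blank (mapTree_blank φ hz) _ _
    (TD_map_le φ hφ hz)

/-- The coordinate-selection index map. -/
def iotaFun (p q : ℕ) (I : Finset (Fin q)) : Fin (p + I.card) → Fin (p + q) :=
  Fin.addCases (fun i => Fin.castAdd q i)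
    (fun j => Fin.natAdd p ((I.orderIsoOfFin rfl j : I) : Fin q))

/-- The restriction map on concatenated features. -/
def phiMap (p q : ℕ) (I : Finset (Fin q)) (z : EuclideanSpace ℝ (Fin (p + q))) :
    EuclideanSpace ℝ (Fin (p + I.card)) :=
  WithLp.toLp 2 fun k => z (iotaFun p q I k)

theorem phiMap_zero (p q : ℕ) (I : Finset (Fin q)) : phiMap p q I 0 = 0 := by ext k; rfl

theorem phiMap_sub (p q : ℕ) (I : Finset (Fin q)) (a b : EuclideanSpace ℝ (Fin (p + q))) :
    phiMap p q I a - phiMap p q I b = phiMap p q I (a - b) := by ext k; rfl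

theorem norm_phiMap_le (p q : ℕ) (I : Finset (Fin q)) (w : EuclideanSpace ℝ (Fin (p + q))) :
    ‖phiMap p q I w‖ ≤ ‖w‖ := by
  rw [EuclideanSpace.norm_eq, EuclideanSpace.norm_eq]
  apply Real.sqrt_le_sqrt
  rw [Fin.sum_univ_add, Fin.sum_univ_add]
  have hl : ∀ i : Fin p, phiMap p q I w (Fin.castAdd I.card i) = w (Fin.castAdd q i) := by
    intro i; exact congrArg w (Fin.addCases_left (motive := fun _ => Fin (p + q)) i)
  have hr : ∀ j : Fin I.card,
      phiMap p q I w (Fin.natAdd p j) = w (Fin.natAdd p ((I.orderIsoOfFin rfl j : I) : Fin q)) := by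
    intro j; exact congrArg w (Fin.addCases_right (motive := fun _ => Fin (p + q)) j)
  simp only [hl, hr]
  refine add_le_add (le_refl _) ?_
  have : ∑ j : Fin I.card, ‖w (Fin.natAdd p ((I.orderIsoOfFin rfl j : I) : Fin q))‖ ^ 2 =
      ∑ i ∈ I, ‖w (Fin.natAdd p i)‖ ^ 2 := by
    rw [← Finset.sum_coe_sort I (fun i => ‖w (Fin.natAdd p i)‖ ^ 2)]
    exact Fintype.sum_equiv (I.orderIsoOfFin rfl).toEquiv _ _ (fun j => rfl)
  rw [this]
  exact Finset.sum_le_sum_of_subset_of_nonneg (Finset.subset_univ I)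
    (fun i _ _ => by positivity)

theorem phiMap_concatE (p q : ℕ) (I : Finset (Fin q)) (a : EuclideanSpace ℝ (Fin p))
    (b : EuclideanSpace ℝ (Fin q)) :
    phiMap p q I (concatE a b) = concatE a (restrictE I b) := by
  ext k
  induction k using Fin.addCases with
  | left i =>
    show (concatE a b) (iotaFun p q I (Fin.castAdd I.card i)) = _
    simp [iotaFun, concatE, ofVec, toVec, Fin.append_left]
  | right j =>
    show (concatE a b) (iotaFun p q I (Fin.natAdd p j)) = _
    simp [iotaFun, concatE, restrictE, ofVec, toVec, Fin.append_left, Fin.append_right]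

end TMDAux

/-- Let `G`, `H` be finite simple graphs with node features `x_v ∈ ℝ^p` and
augmentation vectors `c_v ∈ ℝ^q`.  For a subset `I` of the augmentation coordinates, set
`x̃_v := (x_v, c_v) ∈ ℝ^{p+q}` and `x'_v := (x_v, (c_v)_I) ∈ ℝ^{p+|I|}`.  Then for every depth
`t ≥ 1`, `TMD^t((G,x'), (H,x')) ≤ TMD^t((G,x̃), (H,x̃))`. -/
theorem TMD_mono_of_coordinate_restriction (p q : ℕ) (I : Finset (Fin q))
    {α β : Type} [Fintype α] [DecidableEq α] [Fintype β] [DecidableEq β]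
    (G : SimpleGraph α) [DecidableRel G.Adj] (H : SimpleGraph β) [DecidableRel H.Adj]
    (xG : α → EuclideanSpace ℝ (Fin p)) (xH : β → EuclideanSpace ℝ (Fin p))
    (cG : α → EuclideanSpace ℝ (Fin q)) (cH : β → EuclideanSpace ℝ (Fin q))
    (t : ℕ) (ht : 1 ≤ t) :
    TMD t (FG α G fun v => concatE (xG v) (restrictE I (cG v)))
        (FG β H fun v => concatE (xH v) (restrictE I (cH v))) ≤
      TMD t (FG α G fun v => concatE (xG v) (cG v))
        (FG β H fun v => concatE (xH v) (cH v)) := by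
  have hG : (fun v => concatE (xG v) (restrictE I (cG v))) =
      fun v => TMDAux.phiMap p q I (concatE (xG v) (cG v)) := by
    funext v; rw [TMDAux.phiMap_concatE]
  have hH : (fun v => concatE (xH v) (restrictE I (cH v))) =
      fun v => TMDAux.phiMap p q I (concatE (xH v) (cH v)) := by
    funext v; rw [TMDAux.phiMap_concatE]
  rw [hG, hH]
  refine TMDAux.TMD_map_le (TMDAux.phiMap p q I) ?_ (TMDAux.phiMap_zero p q I) G H _ _ t
  intro a b
  rw [TMDAux.phiMap_sub]
  exact TMDAux.norm_phiMap_le p q I (a - b)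
end

section
/- Let (X, pd) be a pseudometric space, K ≥ 2, and let G_tr, G_te ⊆ X be finite and nonempty. Let ξ ≥ 0 satisfy pd(G, H) ≤ ξ for every G ∈ G_te and H ∈ G_tr. Assume each label-probability function η_k : X → [0, 1] (k = 1, …, K) is Lipschitz with constant C with respect to pd, and let h : X → ℝ^K satisfy ‖h(G) − h(H)‖_∞ ≤ L · pd(G, H) for all G, H ∈ X. If γ ≥ 0 and L ξ ≤ γ/4, then L_{G_te}^{γ/2}(h) − L_{G_tr}^{γ}(h) ≤ C K ξ. -/
open Finset MeasureTheory

/-- `maxOther a k = max_{j ≠ k} a j` (as the supremum of the values at indices `j ≠ k`). -/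
noncomputable def maxOther {K : ℕ} (a : Fin K → ℝ) (k : Fin K) : ℝ :=
  sSup {x : ℝ | ∃ j : Fin K, j ≠ k ∧ a j = x}

/-- Margin-loss indicator: `ℓ^γ(a, k) = 1` if `a k ≤ γ + max_{j ≠ k} a j`, else `0`. -/
noncomputable def marginInd {K : ℕ} (γ : ℝ) (a : Fin K → ℝ) (k : Fin K) : ℝ :=
  if a k ≤ γ + maxOther a k then 1 else 0

/-- Expected margin loss `L_S^γ(h) = (1/|S|) ∑_{G ∈ S} ∑_k η_k(G) ℓ^γ(h, G, k)`. -/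
noncomputable def expLoss {X : Type*} {K : ℕ} (S : Finset X) (η : Fin K → X → ℝ)
    (h : X → Fin K → ℝ) (γ : ℝ) : ℝ :=
  (S.card : ℝ)⁻¹ * ∑ G ∈ S, ∑ k, η k G * marginInd γ (h G) k

/-- Empirical margin loss `L̂_S^γ(h) = (1/|S|) ∑_{G ∈ S} ℓ^γ(h, G, y_G)`. -/
noncomputable def empLoss {X : Type*} {K : ℕ} (S : Finset X) (y : ↥S → Fin K)
    (h : X → Fin K → ℝ) (γ : ℝ) : ℝ :=
  (S.card : ℝ)⁻¹ * ∑ G : ↥S, marginInd γ (h (G : X)) (y G)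

lemma maxOther_le_add {K : ℕ} (hK : 2 ≤ K) (a b : Fin K → ℝ) (k : Fin K) (ε : ℝ)
    (hab : ∀ j, a j ≤ b j + ε) : maxOther a k ≤ maxOther b k + ε := by
  haveI : Nontrivial (Fin K) := Fin.nontrivial_iff_two_le.mpr hK
  obtain ⟨j0, hj0⟩ := exists_ne k
  have hsetb : {x : ℝ | ∃ j : Fin K, j ≠ k ∧ b j = x} = (fun j => b j) '' {j | j ≠ k} := by
    ext x; simp [Set.mem_image, eq_comm]
  have hbdd : BddAbove {x : ℝ | ∃ j : Fin K, j ≠ k ∧ b j = x} := by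
    rw [hsetb]; exact (Set.toFinite _).image _ |>.bddAbove
  refine csSup_le ⟨a j0, j0, hj0, rfl⟩ ?_
  rintro x ⟨j, hj, rfl⟩
  have : b j ≤ maxOther b k := le_csSup hbdd ⟨j, hj, rfl⟩
  linarith [hab j]

lemma avg_le {X : Type*} (S : Finset X) (hS : S.Nonempty) (f : X → ℝ) (c : ℝ)
    (hf : ∀ x ∈ S, f x ≤ c) : (S.card : ℝ)⁻¹ * ∑ x ∈ S, f x ≤ c := by
  have hn : (0:ℝ) < S.card := by exact_mod_cast Finset.card_pos.mpr hS
  rw [inv_mul_le_iff₀ hn]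
  calc ∑ x ∈ S, f x ≤ ∑ _x ∈ S, c := Finset.sum_le_sum hf
    _ = S.card * c := by rw [Finset.sum_const, nsmul_eq_mul]

lemma le_avg {X : Type*} (S : Finset X) (hS : S.Nonempty) (f : X → ℝ) (c : ℝ)
    (hf : ∀ x ∈ S, c ≤ f x) : c ≤ (S.card : ℝ)⁻¹ * ∑ x ∈ S, f x := by
  have hn : (0:ℝ) < S.card := by exact_mod_cast Finset.card_pos.mpr hS
  rw [le_inv_mul_iff₀ hn]
  calc (S.card : ℝ) * c = ∑ _x ∈ S, c := by rw [Finset.sum_const, nsmul_eq_mul]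
    _ ≤ ∑ x ∈ S, f x := Finset.sum_le_sum hf

/-- In a pseudometric space, if the label-probability functions `η_k` are
`C`-Lipschitz, the classifier `h` is `L`-Lipschitz into `(ℝ^K, ‖·‖_∞)`, every test point is
within distance `ξ` of every training point, and `L ξ ≤ γ/4`, then
`L_{te}^{γ/2}(h) − L_{tr}^γ(h) ≤ C K ξ`. -/
theorem loss_gap_bound {X : Type*} [PseudoMetricSpace X] (K : ℕ) (hK : 2 ≤ K)
    (Gtr Gte : Finset X) (htr : Gtr.Nonempty) (hte : Gte.Nonempty)
    (ξ : ℝ) (hξ0 : 0 ≤ ξ)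
    (hξ : ∀ G ∈ Gte, ∀ G' ∈ Gtr, dist G G' ≤ ξ)
    (η : Fin K → X → ℝ)
    (hη0 : ∀ k G, 0 ≤ η k G) (hη1 : ∀ k G, η k G ≤ 1)
    (C : ℝ) (hC : 0 ≤ C)
    (hηLip : ∀ k : Fin K, ∀ G G' : X, |η k G - η k G'| ≤ C * dist G G')
    (h : X → Fin K → ℝ) (L : ℝ)
    (hLip : ∀ G G' : X, ‖h G - h G'‖ ≤ L * dist G G')
    (γ : ℝ) (hγ : 0 ≤ γ) (hLξ : L * ξ ≤ γ / 4) :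
    expLoss Gte η h (γ / 2) - expLoss Gtr η h γ ≤ C * K * ξ := by
  set f : X → ℝ := fun G => ∑ k, η k G * marginInd (γ/2) (h G) k with hf
  set g : X → ℝ := fun G => ∑ k, η k G * marginInd γ (h G) k with hg
  -- key pointwise claim
  have claim1 : ∀ G ∈ Gte, ∀ H ∈ Gtr, f G ≤ g H + C * K * ξ := by
    intro G hG H hH
    have hd : dist G H ≤ ξ := hξ G hG H hH
    have hnorm : ‖h G - h H‖ ≤ γ / 4 := by
      rcases eq_or_lt_of_le (dist_nonneg (x := G) (y := H)) with h0 | h0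
      · have := hLip G H
        rw [← h0] at this
        simpa using le_trans this (by linarith)
      · have hL0 : 0 ≤ L := by
          have h1 := hLip G H
          have h2 := norm_nonneg (h G - h H)
          nlinarith
        have : L * dist G H ≤ L * ξ := by nlinarith
        linarith [hLip G H]
    have hcomp : ∀ j : Fin K, |h G j - h H j| ≤ γ / 4 := by
      intro j
      have := norm_le_pi_norm (h G - h H) j
      simp only [Pi.sub_apply, Real.norm_eq_abs] at this
      linarith
    have key : ∀ k : Fin K,
        η k G * marginInd (γ/2) (h G) k ≤ η k H * marginInd γ (h H) k + C * ξ := by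
      intro k
      by_cases hind : h G k ≤ γ/2 + maxOther (h G) k
      · -- indicator on test is 1; show indicator on train is 1
        have hindH : h H k ≤ γ + maxOther (h H) k := by
          have hmo : maxOther (h G) k ≤ maxOther (h H) k + γ/4 :=
            maxOther_le_add hK _ _ k _ (fun j => by
              have := hcomp j; rw [abs_le] at this; linarith [this.1])
          have := hcomp k; rw [abs_le] at this
          linarith [this.2]
        have hηb : η k G ≤ η k H + C * ξ := by
          have h1 := hηLip k G H
          rw [abs_le] at h1
          have h2 : C * dist G H ≤ C * ξ := by nlinarith
          linarith [h1.2]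
        simp only [marginInd, if_pos hind, if_pos hindH, mul_one]
        exact hηb
      · simp only [marginInd, if_neg hind, mul_zero]
        refine add_nonneg (mul_nonneg (hη0 k H) ?_) (mul_nonneg hC hξ0)
        split <;> norm_num
    calc f G ≤ ∑ k, (η k H * marginInd γ (h H) k + C * ξ) := Finset.sum_le_sum (fun k _ => key k)
      _ = g H + K * (C * ξ) := by
          rw [Finset.sum_add_distrib, Finset.sum_const, card_univ, Fintype.card_fin,
            nsmul_eq_mul]
      _ = g H + C * K * ξ := by ring
  -- f G ≤ avg g + CKξ for each test point
  have claim2 : ∀ G ∈ Gte, f G ≤ expLoss Gtr η h γ + C * K * ξ := by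
    intro G hG
    have : f G - C * K * ξ ≤ (Gtr.card : ℝ)⁻¹ * ∑ H ∈ Gtr, g H :=
      le_avg Gtr htr g _ (fun H hH => by linarith [claim1 G hG H hH])
    simpa [expLoss, hg] using by linarith
  have : expLoss Gte η h (γ/2) ≤ expLoss Gtr η h γ + C * K * ξ := by
    unfold expLoss
    exact avg_le Gte hte f _ claim2
  linarith
end

section
/- Let (Ω, ℙ) be a probability space, let f : Ω → ℝ be measurable with f(ω) ≤ 1 for all ω, and let A ⊆ Ω be a measurable event. Let N > 0, α > 0, c ≥ 0 and λ be real numbers with 0 < λ ≤ N^{2α}. Assume: (i) ℙ(A) ≤ exp(−λ N^{−α}); (ii) f(ω) ≤ c for every ω ∉ A; and (iii) ℙ(A ∩ {ω : f(ω) > N^{−α} + c}) ≤ ℙ(A) · exp(−N^{2α}). Then ln 𝔼[exp(λ f)] ≤ ln 3 + λ c. -/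
open MeasureTheory

lemma my_setIntegral_le {Ω : Type*} [MeasurableSpace Ω] (ℙ : Measure Ω) [IsProbabilityMeasure ℙ]
    (g : Ω → ℝ) (hg : Integrable g ℙ) (S : Set Ω) (hS : MeasurableSet S)
    (K : ℝ) (hK : ∀ ω ∈ S, g ω ≤ K) :
    ∫ ω in S, g ω ∂ℙ ≤ (ℙ S).toReal * K := by
  calc ∫ ω in S, g ω ∂ℙ ≤ ∫ _ in S, K ∂ℙ :=
        setIntegral_mono_on hg.integrableOn (integrableOn_const (measure_ne_top _ _))
          hS hK
    _ = (ℙ S).toReal * K := by rw [setIntegral_const]; rfl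

/-- log-MGF bound.  On a probability space, if `f ≤ 1`, `ℙ(A)` is at most
`exp(−λ N^{−α})`, `f ≤ c` off `A`, and `ℙ(A ∩ {f > N^{−α} + c}) ≤ ℙ(A) exp(−N^{2α})`, then for
`0 < λ ≤ N^{2α}`: `ln 𝔼[exp(λ f)] ≤ ln 3 + λ c`. -/
theorem log_mgf_bound {Ω : Type*} [MeasurableSpace Ω]
    (ℙ : Measure Ω) [IsProbabilityMeasure ℙ]
    (f : Ω → ℝ) (hfMeas : Measurable f) (hf1 : ∀ ω, f ω ≤ 1)
    (A : Set Ω) (hA : MeasurableSet A)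
    (N α c lam : ℝ) (hN : 0 < N) (hα : 0 < α) (hc : 0 ≤ c)
    (hlam0 : 0 < lam) (hlam : lam ≤ N ^ (2 * α))
    (h1 : ℙ A ≤ ENNReal.ofReal (Real.exp (-(lam * N ^ (-α)))))
    (h2 : ∀ ω ∉ A, f ω ≤ c)
    (h3 : ℙ (A ∩ {ω | N ^ (-α) + c < f ω}) ≤ ℙ A * ENNReal.ofReal (Real.exp (-(N ^ (2 * α))))) :
    Real.log (∫ ω, Real.exp (lam * f ω) ∂ℙ) ≤ Real.log 3 + lam * c := by
  set g : Ω → ℝ := fun ω => Real.exp (lam * f ω) with hgdef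
  have hgmeas : Measurable g := (hfMeas.const_mul lam).exp
  have hgint : Integrable g ℙ := by
    refine Integrable.mono' (integrable_const (Real.exp lam)) hgmeas.aestronglyMeasurable ?_
    filter_upwards with ω
    rw [Real.norm_eq_abs, abs_of_pos (Real.exp_pos _)]
    exact Real.exp_le_exp.2 (by nlinarith [hf1 ω])
  set B : Set Ω := {ω | N ^ (-α) + c < f ω} with hBdef
  have hB : MeasurableSet B := measurableSet_lt measurable_const hfMeas
  -- bound on Aᶜ
  have b1 : ∫ ω in Aᶜ, g ω ∂ℙ ≤ Real.exp (lam * c) := by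
    have := my_setIntegral_le ℙ g hgint Aᶜ hA.compl (Real.exp (lam * c))
      (fun ω hω => Real.exp_le_exp.2 (mul_le_mul_of_nonneg_left (h2 ω hω) hlam0.le))
    refine this.trans ?_
    have : (ℙ Aᶜ).toReal ≤ 1 := by
      simpa using ENNReal.toReal_mono ENNReal.one_ne_top prob_le_one
    nlinarith [Real.exp_pos (lam * c)]
  -- bound on A \ B
  have hPA : (ℙ A).toReal ≤ Real.exp (-(lam * N ^ (-α))) := by
    have := ENNReal.toReal_mono ENNReal.ofReal_ne_top h1
    rwa [ENNReal.toReal_ofReal (Real.exp_pos _).le] at this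
  have b2 : ∫ ω in A \ B, g ω ∂ℙ ≤ Real.exp (lam * c) := by
    have hK : ∀ ω ∈ A \ B, g ω ≤ Real.exp (lam * (N ^ (-α) + c)) := by
      intro ω hω
      exact Real.exp_le_exp.2 (mul_le_mul_of_nonneg_left (not_lt.mp hω.2) hlam0.le)
    refine (my_setIntegral_le ℙ g hgint _ (hA.diff hB) _ hK).trans ?_
    have hm : (ℙ (A \ B)).toReal ≤ Real.exp (-(lam * N ^ (-α))) :=
      le_trans (ENNReal.toReal_mono (measure_ne_top _ _) (measure_mono Set.diff_subset)) hPA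
    calc (ℙ (A \ B)).toReal * Real.exp (lam * (N ^ (-α) + c))
        ≤ Real.exp (-(lam * N ^ (-α))) * Real.exp (lam * (N ^ (-α) + c)) := by
          exact mul_le_mul_of_nonneg_right hm (Real.exp_pos _).le
      _ = Real.exp (lam * c) := by rw [← Real.exp_add]; ring_nf
  -- bound on A ∩ B
  have b3 : ∫ ω in A ∩ B, g ω ∂ℙ ≤ Real.exp (lam * c) := by
    have hK : ∀ ω ∈ A ∩ B, g ω ≤ Real.exp (N ^ (2 * α)) := by
      intro ω _
      exact Real.exp_le_exp.2 (le_trans (by nlinarith [hf1 ω]) hlam)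
    refine (my_setIntegral_le ℙ g hgint _ (hA.inter hB) _ hK).trans ?_
    have hm : (ℙ (A ∩ B)).toReal ≤ Real.exp (-(N ^ (2 * α))) := by
      have h3' : ℙ (A ∩ B) ≤ ENNReal.ofReal (Real.exp (-(N ^ (2 * α)))) := by
        refine h3.trans ?_
        calc ℙ A * ENNReal.ofReal (Real.exp (-(N ^ (2 * α))))
            ≤ 1 * ENNReal.ofReal (Real.exp (-(N ^ (2 * α)))) :=
              by gcongr; exact prob_le_one
          _ = _ := one_mul _
      have := ENNReal.toReal_mono ENNReal.ofReal_ne_top h3'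
      rwa [ENNReal.toReal_ofReal (Real.exp_pos _).le] at this
    calc (ℙ (A ∩ B)).toReal * Real.exp (N ^ (2 * α))
        ≤ Real.exp (-(N ^ (2 * α))) * Real.exp (N ^ (2 * α)) :=
          mul_le_mul_of_nonneg_right hm (Real.exp_pos _).le
      _ = 1 := by rw [← Real.exp_add]; simp
      _ ≤ Real.exp (lam * c) := Real.one_le_exp (by positivity)
  have key : ∫ ω, g ω ∂ℙ ≤ 3 * Real.exp (lam * c) := by
    have split1 : ∫ ω, g ω ∂ℙ = ∫ ω in A, g ω ∂ℙ + ∫ ω in Aᶜ, g ω ∂ℙ :=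
      (integral_add_compl hA hgint).symm
    have split2 : ∫ ω in A, g ω ∂ℙ = ∫ ω in A ∩ B, g ω ∂ℙ + ∫ ω in A \ B, g ω ∂ℙ :=
      (integral_inter_add_diff hB hgint.integrableOn).symm
    rw [split1, split2]; linarith
  have h0 : 0 ≤ ∫ ω, g ω ∂ℙ := integral_nonneg fun ω => (Real.exp_pos _).le
  have hrhs : 0 < 3 * Real.exp (lam * c) := by positivity
  calc Real.log (∫ ω, g ω ∂ℙ) ≤ Real.log (3 * Real.exp (lam * c)) := by
        rcases eq_or_lt_of_le h0 with h | h
        · rw [← h, Real.log_zero]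
          exact Real.log_nonneg (by nlinarith [Real.one_le_exp (mul_nonneg hlam0.le hc)])
        · exact Real.log_le_log h key
    _ = Real.log 3 + lam * c := by rw [Real.log_mul (by norm_num) (Real.exp_pos _).ne',
        Real.log_exp]
end

section
/- Consider an MPNN with t+1 layers and sum aggregation whose message functions g^{(k)} satisfy g^{(k)}(0) = 0 and are Lipschitz with constants L_{g^{(k)}}, and whose update functions f^{(k)} satisfy f^{(k)}(0, 0) = 0 and are Lipschitz for the sum metric with constants L_{f^{(k)}}. Define the layer-(t+1) message at node v as m_v^{(t+1)} := ∑_{u ∈ N(v)} g^{(t+1)}( x_u^{(t)} ). Then for every featured graph G with maximum node degree at most d and ‖x_v‖ ≤ B for all nodes v: max_{v ∈ V(G)} ‖m_v^{(t+1)}‖ ≤ d · L_{g^{(t+1)}} · ( ∏_{k=1}^{t} L_{f^{(k)}} (1 + d L_{g^{(k)}}) ) · B. -/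
open Finset

universe u

/-- Node representations of an MPNN with sum aggregation on featured graphs over
`ℝ^{Fd 0}`: `x_v^{(0)} = x_v` and
`x_v^{(k+1)} = f^{(k+1)}(x_v^{(k)}, ∑_{u ∈ N(v)} g^{(k+1)}(x_u^{(k)}))`,
where layer `k+1` has update `f k` and message `g k`. -/
noncomputable def mpnnRep (Fd M : ℕ → ℕ)
    (f : ∀ k : ℕ, EuclideanSpace ℝ (Fin (Fd k)) × EuclideanSpace ℝ (Fin (M k)) →
      EuclideanSpace ℝ (Fin (Fd (k+1))))
    (g : ∀ k : ℕ, EuclideanSpace ℝ (Fin (Fd k)) → EuclideanSpace ℝ (Fin (M k)))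
    (G : FeaturedGraph (EuclideanSpace ℝ (Fin (Fd 0)))) :
    ∀ k : ℕ, G.V → EuclideanSpace ℝ (Fin (Fd k))
  | 0 => G.feat
  | (k+1) => fun v =>
      f k (mpnnRep Fd M f g G k v,
        ∑ u ∈ G.graph.neighborFinset v, g k (mpnnRep Fd M f g G k u))

/-- Under the same assumptions as the node-norm bound, the layer-(t+1)
message `m_v^{(t+1)} = ∑_{u ∈ N(v)} g^{(t+1)}(x_u^{(t)})` satisfies
`max_v ‖m_v^{(t+1)}‖ ≤ d · Lg (t+1) · (∏_{k<t} Lf k (1 + d·Lg k)) · B`. -/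
theorem mpnn_message_norm_bound (Fd Mdim : ℕ → ℕ) (t : ℕ)
    (f : ∀ k : ℕ, EuclideanSpace ℝ (Fin (Fd k)) × EuclideanSpace ℝ (Fin (Mdim k)) →
      EuclideanSpace ℝ (Fin (Fd (k+1))))
    (g : ∀ k : ℕ, EuclideanSpace ℝ (Fin (Fd k)) → EuclideanSpace ℝ (Fin (Mdim k)))
    (Lf Lg : ℕ → ℝ)
    (hLf0 : ∀ k < t + 1, 0 ≤ Lf k) (hLg0 : ∀ k < t + 1, 0 ≤ Lg k)
    (hg0 : ∀ k < t + 1, g k 0 = 0)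
    (hgLip : ∀ k < t + 1, ∀ a b, ‖g k a - g k b‖ ≤ Lg k * ‖a - b‖)
    (hf0 : ∀ k < t + 1, f k (0, 0) = 0)
    (hfLip : ∀ k < t + 1, ∀ x m x' m',
      ‖f k (x, m) - f k (x', m')‖ ≤ Lf k * (‖x - x'‖ + ‖m - m'‖))
    (G : FeaturedGraph (EuclideanSpace ℝ (Fin (Fd 0)))) (d : ℕ) (B : ℝ)
    (hdeg : ∀ v : G.V, (G.graph.neighborFinset v).card ≤ d)
    (hB : ∀ v : G.V, ‖G.feat v‖ ≤ B) :
    ∀ v : G.V,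
      ‖∑ u ∈ G.graph.neighborFinset v, g t (mpnnRep Fd Mdim f g G t u)‖ ≤
        (d : ℝ) * Lg t * (∏ k ∈ Finset.range t, Lf k * (1 + (d : ℝ) * Lg k)) * B := by
  intro v
  have hB0 : 0 ≤ B := le_trans (norm_nonneg _) (hB v)
  set C : ℕ → ℝ := fun k => ∏ j ∈ Finset.range k, Lf j * (1 + (d : ℝ) * Lg j) with hC
  have hC0 : ∀ k, k ≤ t → 0 ≤ C k := by
    intro k hk
    apply Finset.prod_nonneg
    intro j hj
    have hjt : j < t + 1 := by
      have := Finset.mem_range.mp hj; omega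
    have h1 : (0:ℝ) ≤ 1 + (d : ℝ) * Lg j := by
      have := hLg0 j hjt
      positivity
    exact mul_nonneg (hLf0 j hjt) h1
  -- norm bound on g applied to any vector
  have hgnorm : ∀ k, k < t + 1 → ∀ a, ‖g k a‖ ≤ Lg k * ‖a‖ := by
    intro k hk a
    have := hgLip k hk a 0
    simpa [hg0 k hk] using this
  -- key: representation norm bound
  have rep : ∀ k, k ≤ t → ∀ w : G.V, ‖mpnnRep Fd Mdim f g G k w‖ ≤ C k * B := by
    intro k
    induction k with
    | zero => intro _ w; simpa [hC, mpnnRep] using hB w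
    | succ k ih =>
      intro hk w
      have hk' : k ≤ t := Nat.le_of_succ_le hk
      have hkt : k < t + 1 := by omega
      have ihw := ih hk'
      -- norm of message
      have hmsg : ‖∑ u ∈ G.graph.neighborFinset v, g k (mpnnRep Fd Mdim f g G k u)‖
          ≤ (d : ℝ) * (Lg k * (C k * B)) → True := fun _ => trivial
      have hmsgw : ∀ w : G.V,
          ‖∑ u ∈ G.graph.neighborFinset w, g k (mpnnRep Fd Mdim f g G k u)‖
          ≤ (d : ℝ) * (Lg k * (C k * B)) := by
        intro w'
        calc ‖∑ u ∈ G.graph.neighborFinset w', g k (mpnnRep Fd Mdim f g G k u)‖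
            ≤ ∑ u ∈ G.graph.neighborFinset w', ‖g k (mpnnRep Fd Mdim f g G k u)‖ :=
              norm_sum_le _ _
          _ ≤ ∑ u ∈ G.graph.neighborFinset w', Lg k * (C k * B) := by
              apply Finset.sum_le_sum
              intro u _
              exact le_trans (hgnorm k hkt _)
                (mul_le_mul_of_nonneg_left (ihw u) (hLg0 k hkt))
          _ = ((G.graph.neighborFinset w').card : ℝ) * (Lg k * (C k * B)) := by
              simp [Finset.sum_const, nsmul_eq_mul]
          _ ≤ (d : ℝ) * (Lg k * (C k * B)) := by
              apply mul_le_mul_of_nonneg_right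
              · exact_mod_cast hdeg w'
              · exact mul_nonneg (hLg0 k hkt) (mul_nonneg (hC0 k hk') hB0)
      have hfk : ‖mpnnRep Fd Mdim f g G (k+1) w‖
          ≤ Lf k * (‖mpnnRep Fd Mdim f g G k w‖ +
            ‖∑ u ∈ G.graph.neighborFinset w, g k (mpnnRep Fd Mdim f g G k u)‖) := by
        have := hfLip k hkt (mpnnRep Fd Mdim f g G k w)
          (∑ u ∈ G.graph.neighborFinset w, g k (mpnnRep Fd Mdim f g G k u)) 0 0
        simpa [mpnnRep, hf0 k hkt, show f k 0 = 0 from hf0 k hkt] using this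
      have : ‖mpnnRep Fd Mdim f g G (k+1) w‖
          ≤ Lf k * (C k * B + (d : ℝ) * (Lg k * (C k * B))) := by
        refine le_trans hfk (mul_le_mul_of_nonneg_left ?_ (hLf0 k hkt))
        exact add_le_add (ihw w) (hmsgw w)
      calc ‖mpnnRep Fd Mdim f g G (k+1) w‖
          ≤ Lf k * (C k * B + (d : ℝ) * (Lg k * (C k * B))) := this
        _ = C (k+1) * B := by
            simp only [hC, Finset.prod_range_succ]
            ring
  -- finish: message bound at layer t+1
  have htlt : t < t + 1 := Nat.lt_succ_self t
  calc ‖∑ u ∈ G.graph.neighborFinset v, g t (mpnnRep Fd Mdim f g G t u)‖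
      ≤ ∑ u ∈ G.graph.neighborFinset v, ‖g t (mpnnRep Fd Mdim f g G t u)‖ :=
        norm_sum_le _ _
    _ ≤ ∑ u ∈ G.graph.neighborFinset v, Lg t * (C t * B) := by
        apply Finset.sum_le_sum
        intro u _
        exact le_trans (hgnorm t htlt _)
          (mul_le_mul_of_nonneg_left (rep t le_rfl u) (hLg0 t htlt))
    _ = ((G.graph.neighborFinset v).card : ℝ) * (Lg t * (C t * B)) := by
        simp [Finset.sum_const, nsmul_eq_mul]
    _ ≤ (d : ℝ) * (Lg t * (C t * B)) := by
        apply mul_le_mul_of_nonneg_right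
        · exact_mod_cast hdeg v
        · exact mul_nonneg (hLg0 t htlt) (mul_nonneg (hC0 t le_rfl) hB0)
    _ = (d : ℝ) * Lg t * (∏ k ∈ Finset.range t, Lf k * (1 + (d : ℝ) * Lg k)) * B := by
        simp only [hC]; ring
end
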